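/- Let X_J ⊂ X be measurable with μ(X_J) > 0, set μ_J := μ restricted to X_J, let ν_J ∈ M₊(Y) satisfy ν_J ≤ ν and ‖ν_J‖ = ‖μ_J‖, let u ∈ L^∞₊(X,μ), v ∈ L^∞₊(Y,ν) be such that π := (u⊗v)·K ∈ Π(μ_J, ν_J), let X_i ⊂ X_J be measurable with μ(X_i) > 0, and set ν_i := P_Y(π restricted to X_i×Y). Then for μ-a.e. x ∈ X_i and ν-a.e. y ∈ Y: (dν_i/dν(y))·exp(−‖c‖_∞/ε)/μ(X_i) ≤ u(x)·v(y) ≤ exp(2‖c‖_∞/ε)/μ(X_i). -/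

import Mathlib

open MeasureTheory ENNReal Filter Topology

noncomputable section

/-- `phi s = s * log s - s + 1` (note `phi 0 = 1` since `Real.log 0 = 0`);
this is the integrand of the Kullback--Leibler divergence. -/
def phi (s : ℝ) : ℝ := s * Real.log s - s + 1

open Classical in
/-- Kullback--Leibler divergence `KL(ρ|σ) ∈ [0,∞]`: `∫ phi (dρ/dσ) dσ` if `ρ ≪ σ`,
and `∞` otherwise (nonnegativity of `ρ` is automatic for measures). -/
def KL {Z : Type*} [MeasurableSpace Z] (ρ σ : Measure Z) : ℝ≥0∞ :=
  if ρ ≪ σ then ∫⁻ z, ENNReal.ofReal (phi ((ρ.rnDeriv σ) z).toReal) ∂σ else ⊤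

/-- The set `Π(μh, νh)` of transport plans with marginals `μh` and `νh`. -/
def Coupling {X Y : Type*} [MeasurableSpace X] [MeasurableSpace Y]
    (μh : Measure X) (νh : Measure Y) : Set (Measure (X × Y)) :=
  {π | π.map Prod.fst = μh ∧ π.map Prod.snd = νh}

/-- The Gibbs kernel measure `K = exp(-c/ε) ⋅ (μ ⊗ ν)`. -/
def Kmeas {X Y : Type*} [MeasurableSpace X] [MeasurableSpace Y]
    (μ : Measure X) (ν : Measure Y) [SFinite ν] (c : X × Y → ℝ) (ε : ℝ) : Measure (X × Y) :=
  (μ.prod ν).withDensity fun p => ENNReal.ofReal (Real.exp (-c p / ε))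

/-- The product density `(u ⊗ v)(x,y) = u x * v y`, as an `ℝ≥0∞`-valued density. -/
def prodDensity {X Y : Type*} (u : X → ℝ) (v : Y → ℝ) : X × Y → ℝ≥0∞ :=
  fun p => ENNReal.ofReal (u p.1 * v p.2)

/-- `L^∞₊(μ)`: measurable, a.e. nonnegative, essentially bounded functions. -/
def LinftyPlus {Z : Type*} [MeasurableSpace Z] (μ : Measure Z) (u : Z → ℝ) : Prop :=
  Measurable u ∧ (∀ᵐ z ∂μ, 0 ≤ u z) ∧ ∃ C : ℝ, ∀ᵐ z ∂μ, u z ≤ C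

/-- Lemma 2.9 (iv): local control of the product of scaling
factors of a cell plan on a basic cell `X_i ⊆ X_J`:
`(dνᵢ/dν)(y)·exp(−‖c‖/ε)/μ(Xᵢ) ≤ u(x)·v(y) ≤ exp(2‖c‖/ε)/μ(Xᵢ)`. -/
lemma map_fst_withDensity' {X Y : Type*} [MeasurableSpace X] [MeasurableSpace Y]
    (μ : Measure X) (ν : Measure Y) [SFinite μ] [SFinite ν]
    {f : X × Y → ℝ≥0∞} (hf : Measurable f) :
    ((μ.prod ν).withDensity f).map Prod.fst
      = μ.withDensity (fun x => ∫⁻ y, f (x, y) ∂ν) := by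
  ext s hs
  rw [Measure.map_apply measurable_fst hs,
    withDensity_apply _ (measurable_fst hs), withDensity_apply _ hs]
  have hpre : (Prod.fst ⁻¹' s : Set (X × Y)) = s ×ˢ Set.univ := by
    ext p; simp
  rw [hpre]
  calc ∫⁻ p in s ×ˢ Set.univ, f p ∂(μ.prod ν)
      = ∫⁻ p, f p ∂((μ.restrict s).prod ν) := by
        rw [← Measure.restrict_univ (μ := ν), Measure.prod_restrict,
          Measure.restrict_univ]
    _ = ∫⁻ x in s, ∫⁻ y, f (x, y) ∂ν ∂μ := lintegral_prod _ hf.aemeasurable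

lemma map_snd_withDensity' {X Y : Type*} [MeasurableSpace X] [MeasurableSpace Y]
    (μ : Measure X) (ν : Measure Y) [SFinite μ] [SFinite ν]
    {f : X × Y → ℝ≥0∞} (hf : Measurable f) :
    ((μ.prod ν).withDensity f).map Prod.snd
      = ν.withDensity (fun y => ∫⁻ x, f (x, y) ∂μ) := by
  ext s hs
  rw [Measure.map_apply measurable_snd hs,
    withDensity_apply _ (measurable_snd hs), withDensity_apply _ hs]
  have hpre : (Prod.snd ⁻¹' s : Set (X × Y)) = Set.univ ×ˢ s := by
    ext p; simp
  rw [hpre]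
  calc ∫⁻ p in Set.univ ×ˢ s, f p ∂(μ.prod ν)
      = ∫⁻ p, f p ∂(μ.prod (ν.restrict s)) := by
        rw [← Measure.restrict_univ (μ := μ), Measure.prod_restrict,
          Measure.restrict_univ]
    _ = ∫⁻ y in s, ∫⁻ x, f (x, y) ∂μ ∂ν := lintegral_prod_symm _ hf.aemeasurable

lemma ae_le_one_of_withDensity_le {Z : Type*} [MeasurableSpace Z]
    (ν : Measure Z) [SigmaFinite ν] {ρ : Z → ℝ≥0∞} (hρ : Measurable ρ)
    (h : ν.withDensity ρ ≤ ν) : ∀ᵐ z ∂ν, ρ z ≤ 1 := by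
  filter_upwards [Measure.rnDeriv_le_one_of_le h,
    Measure.rnDeriv_withDensity ν hρ] with z h1 h2
  rw [← h2]; exact h1

theorem density_abs_bound
    {X Y : Type*} [MetricSpace X] [CompactSpace X] [MeasurableSpace X] [BorelSpace X]
    [MetricSpace Y] [CompactSpace Y] [MeasurableSpace Y] [BorelSpace Y]
    (μ : Measure X) (ν : Measure Y) [IsProbabilityMeasure μ] [IsProbabilityMeasure ν]
    (c : X × Y → ℝ) (hc : Measurable c) (cmax : ℝ)
    (hc0 : ∀ p, 0 ≤ c p) (hcmax : ∀ p, c p ≤ cmax)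
    (ε : ℝ) (hε : 0 < ε)
    (XJ : Set X) (hXJ : MeasurableSet XJ) (hXJpos : 0 < μ XJ)
    (νJ : Measure Y) (hνJle : νJ ≤ ν) (hνJmass : νJ Set.univ = μ XJ)
    (u : X → ℝ) (v : Y → ℝ) (hu : LinftyPlus μ u) (hv : LinftyPlus ν v)
    (π : Measure (X × Y)) (hπdef : π = (Kmeas μ ν c ε).withDensity (prodDensity u v))
    (hplan : π ∈ Coupling (μ.restrict XJ) νJ)
    (Xi : Set X) (hXi : MeasurableSet Xi) (hXisub : Xi ⊆ XJ) (hXipos : 0 < μ Xi)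
    (νi : Measure Y) (hνi : νi = (π.restrict (Xi ×ˢ Set.univ)).map Prod.snd) :
    ∀ᵐ x ∂μ.restrict Xi, ∀ᵐ y ∂ν,
      (νi.rnDeriv ν y).toReal * Real.exp (-cmax / ε) / (μ Xi).toReal ≤ u x * v y ∧
      u x * v y ≤ Real.exp (2 * cmax / ε) / (μ Xi).toReal := by
  obtain ⟨hplan1, hplan2⟩ := hplan
  obtain ⟨hum, hu0, Cu, huC⟩ := hu
  obtain ⟨hvm, hv0, Cv, hvC⟩ := hv
  set U : X → ℝ≥0∞ := fun x => ENNReal.ofReal (u x) with hU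
  set V : Y → ℝ≥0∞ := fun y => ENNReal.ofReal (v y) with hV
  have hUm : Measurable U := hum.ennreal_ofReal
  have hVm : Measurable V := hvm.ennreal_ofReal
  set kE : X × Y → ℝ≥0∞ := fun p => ENNReal.ofReal (Real.exp (-c p / ε)) with hkE
  have hkEm : Measurable kE := ((hc.neg.div_const ε).exp).ennreal_ofReal
  set f : X × Y → ℝ≥0∞ := fun p => kE p * (U p.1 * V p.2) with hfdef
  have hfm : Measurable f :=
    hkEm.mul ((hUm.comp measurable_fst).mul (hVm.comp measurable_snd))
  set EE : ℝ≥0∞ := ENNReal.ofReal (Real.exp (cmax / ε)) with hEE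
  have hEE0 : EE ≠ 0 := by
    simp [hEE, ENNReal.ofReal_eq_zero, not_le, Real.exp_pos]
  have hEEtop : EE ≠ ⊤ := ENNReal.ofReal_ne_top
  -- kernel bounds
  have hkub : ∀ p, kE p ≤ 1 := by
    intro p
    have : Real.exp (-c p / ε) ≤ 1 := by
      rw [Real.exp_le_one_iff]
      apply div_nonpos_iff.2
      exact Or.inr ⟨neg_nonpos.2 (hc0 p), hε.le⟩
    simpa [hkE] using ENNReal.ofReal_le_ofReal this
  have hklb : ∀ p, EE⁻¹ ≤ kE p := by
    intro p
    have h1 : EE⁻¹ = ENNReal.ofReal (Real.exp (-cmax / ε)) := by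
      rw [hEE, ← ENNReal.ofReal_inv_of_pos (Real.exp_pos _), ← Real.exp_neg, neg_div]
    rw [h1]
    apply ENNReal.ofReal_le_ofReal
    apply Real.exp_le_exp.2
    exact (div_le_div_iff_of_pos_right hε).2 (neg_le_neg (hcmax p))
  -- rewrite π as a single density over μ.prod ν
  have hpdm : Measurable (prodDensity u v) :=
    ((hum.comp measurable_fst).mul (hvm.comp measurable_snd)).ennreal_ofReal
  have hπ2 : π = (μ.prod ν).withDensity f := by
    rw [hπdef, Kmeas, ← withDensity_mul _ hkEm hpdm]
    apply withDensity_congr_ae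
    filter_upwards [Measure.quasiMeasurePreserving_fst.ae hu0,
      Measure.quasiMeasurePreserving_snd.ae hv0] with p h1 h2
    simp only [Pi.mul_apply, prodDensity, hfdef]
    rw [ENNReal.ofReal_mul h1]
  -- first marginal
  set G : X → ℝ≥0∞ := fun x => ∫⁻ y, f (x, y) ∂ν with hG
  have hGm : Measurable G := hfm.lintegral_prod_right'
  have hmarg1 : μ.withDensity G = μ.restrict XJ := by
    rw [hG, ← map_fst_withDensity' μ ν hfm, ← hπ2, hplan1]
  have hkey : ∀ᵐ x ∂μ, G x = XJ.indicator 1 x := by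
    apply (withDensity_eq_iff_of_sigmaFinite hGm.aemeasurable
      ((measurable_one.indicator hXJ).aemeasurable)).1
    rw [hmarg1, withDensity_indicator_one hXJ]
  set Iv : ℝ≥0∞ := ∫⁻ y, V y ∂ν with hIv
  have hIvtop : Iv ≠ ⊤ := by
    have hle : Iv ≤ ENNReal.ofReal Cv := by
      calc Iv ≤ ∫⁻ _, ENNReal.ofReal Cv ∂ν :=
            lintegral_mono_ae (hvC.mono fun y hy => ENNReal.ofReal_le_ofReal hy)
        _ = ENNReal.ofReal Cv := by simp
    exact ne_top_of_le_ne_top ENNReal.ofReal_ne_top hle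
  -- pointwise bounds on G
  have hGub : ∀ x, G x ≤ U x * Iv := by
    intro x
    calc G x ≤ ∫⁻ y, U x * V y ∂ν := by
          apply lintegral_mono
          intro y
          calc f (x, y) = kE (x, y) * (U x * V y) := rfl
            _ ≤ 1 * (U x * V y) := mul_le_mul_left (hkub _) _
            _ = U x * V y := one_mul _
      _ = U x * Iv := lintegral_const_mul (U x) hVm
  have hGlb : ∀ x, EE⁻¹ * (U x * Iv) ≤ G x := by
    intro x
    calc EE⁻¹ * (U x * Iv) = (EE⁻¹ * U x) * Iv := (mul_assoc _ _ _).symm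
      _ = ∫⁻ y, (EE⁻¹ * U x) * V y ∂ν := (lintegral_const_mul _ hVm).symm
      _ ≤ G x := by
          apply lintegral_mono
          intro y
          calc (EE⁻¹ * U x) * V y = EE⁻¹ * (U x * V y) := mul_assoc _ _ _
            _ ≤ kE (x, y) * (U x * V y) := mul_le_mul_left (hklb _) _
  -- a.e. bounds for U on XJ
  have hUlb : ∀ᵐ x ∂μ, x ∈ XJ → 1 ≤ U x * Iv := by
    filter_upwards [hkey] with x hx hxJ
    have h1 : G x = 1 := by rw [hx, Set.indicator_of_mem hxJ]; rfl
    rw [← h1]; exact hGub x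
  have hUub : ∀ᵐ x ∂μ, x ∈ XJ → U x * Iv ≤ EE := by
    filter_upwards [hkey] with x hx hxJ
    have h1 : G x = 1 := by rw [hx, Set.indicator_of_mem hxJ]; rfl
    have h2 : EE⁻¹ * (U x * Iv) ≤ 1 := h1 ▸ hGlb x
    have h3 : (U x * Iv) * EE⁻¹ ≤ 1 := by rwa [mul_comm] at h2
    have := ENNReal.le_inv_iff_mul_le.2 h3
    rwa [inv_inv] at this
  have hIv0 : Iv ≠ 0 := by
    intro h0
    have hae : ∀ᵐ x ∂μ, x ∉ XJ := by
      filter_upwards [hUlb] with x hx hxJ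
      have := hx hxJ
      rw [h0, mul_zero] at this
      simp at this
    exact hXJpos.ne' (measure_eq_zero_iff_ae_notMem.mpr hae)
  -- second marginal
  set H : Y → ℝ≥0∞ := fun y => ∫⁻ x, f (x, y) ∂μ with hH
  have hHm : Measurable H := hfm.lintegral_prod_left'
  have hmarg2 : ν.withDensity H = νJ := by
    rw [hH, ← map_snd_withDensity' μ ν hfm, ← hπ2, hplan2]
  have hHle1 : ∀ᵐ y ∂ν, H y ≤ 1 :=
    ae_le_one_of_withDensity_le ν hHm (hmarg2 ▸ hνJle)
  -- lower bound of H
  have hUlb' : ∀ᵐ x ∂μ, x ∈ XJ → Iv⁻¹ ≤ U x := by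
    filter_upwards [hUlb] with x hx hxJ
    have := (ENNReal.div_le_iff_le_mul (Or.inl hIv0) (Or.inl hIvtop)).2 (hx hxJ)
    rwa [one_div] at this
  have hHlb : ∀ᵐ y ∂ν, ∀ x' : Unit, (EE⁻¹ * (Iv⁻¹ * V y)) * μ XJ ≤ H y := by
    filter_upwards [] with y _
    calc (EE⁻¹ * (Iv⁻¹ * V y)) * μ XJ = ∫⁻ _ in XJ, EE⁻¹ * (Iv⁻¹ * V y) ∂μ :=
          (setLIntegral_const _ _).symm
      _ ≤ ∫⁻ x in XJ, EE⁻¹ * (U x * V y) ∂μ := by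
          apply lintegral_mono_ae
          filter_upwards [ae_restrict_of_ae hUlb', ae_restrict_mem hXJ] with x hx hxJ
          exact mul_le_mul_right (mul_le_mul_left (hx hxJ) _) _
      _ ≤ ∫⁻ x in XJ, f (x, y) ∂μ := by
          apply lintegral_mono
          intro x
          exact mul_le_mul_left (hklb _) _
      _ ≤ H y := setLIntegral_le_lintegral _ _
  have hVub : ∀ᵐ y ∂ν, (EE⁻¹ * (Iv⁻¹ * V y)) * μ XJ ≤ 1 := by
    filter_upwards [hHlb, hHle1] with y h1 h2
    exact (h1 ()).trans h2
  -- νi as a density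
  set Hi : Y → ℝ≥0∞ := fun y => ∫⁻ x, f (x, y) ∂(μ.restrict Xi) with hHi
  have hHim : Measurable Hi := hfm.lintegral_prod_left'
  have hνi2 : νi = ν.withDensity Hi := by
    have hres : (μ.prod ν).restrict (Xi ×ˢ Set.univ) = (μ.restrict Xi).prod ν := by
      rw [← Measure.prod_restrict, Measure.restrict_univ]
    rw [hνi, hπ2, restrict_withDensity (hXi.prod MeasurableSet.univ), hres,
      map_snd_withDensity' _ _ hfm]
  have hrn : νi.rnDeriv ν =ᵐ[ν] Hi := by
    rw [hνi2]; exact Measure.rnDeriv_withDensity ν hHim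
  -- upper bound on U on XJ in divided form
  have hUub' : ∀ᵐ x ∂μ, x ∈ XJ → U x ≤ EE / Iv := by
    filter_upwards [hUub] with x hx hxJ
    exact (ENNReal.le_div_iff_mul_le (Or.inl hIv0) (Or.inl hIvtop)).2 (hx hxJ)
  have hHiub : ∀ᵐ y ∂ν, Hi y ≤ (EE / Iv) * V y * μ Xi := by
    filter_upwards [] with y
    calc Hi y ≤ ∫⁻ x in Xi, U x * V y ∂μ := by
          apply lintegral_mono
          intro x
          calc f (x, y) = kE (x, y) * (U x * V y) := rfl
            _ ≤ 1 * (U x * V y) := mul_le_mul_left (hkub _) _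
            _ = U x * V y := one_mul _
      _ ≤ ∫⁻ _ in Xi, (EE / Iv) * V y ∂μ := by
          apply lintegral_mono_ae
          filter_upwards [ae_restrict_of_ae hUub', ae_restrict_mem hXi] with x hx hxi
          exact mul_le_mul_left (hx (hXisub hxi)) _
      _ = (EE / Iv) * V y * μ Xi := setLIntegral_const _ _
  -- real constants
  set E : ℝ := Real.exp (cmax / ε) with hE
  have hEpos : 0 < E := Real.exp_pos _
  set a : ℝ := Iv.toReal with ha
  have hapos : 0 < a := ENNReal.toReal_pos hIv0 hIvtop
  set m : ℝ := (μ Xi).toReal with hm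
  have hmpos : 0 < m := ENNReal.toReal_pos hXipos.ne' (measure_ne_top μ Xi)
  set mJ : ℝ := (μ XJ).toReal with hmJ
  have hmJpos : 0 < mJ := ENNReal.toReal_pos hXJpos.ne' (measure_ne_top μ XJ)
  have hmmJ : m ≤ mJ := ENNReal.toReal_mono (measure_ne_top μ XJ) (measure_mono hXisub)
  have hEEtoReal : EE.toReal = E := ENNReal.toReal_ofReal hEpos.le
  -- real a.e. facts in x
  have hxfacts : ∀ᵐ x ∂μ.restrict Xi, 0 ≤ u x ∧ 1 ≤ u x * a ∧ u x * a ≤ E := by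
    filter_upwards [ae_restrict_of_ae hu0, ae_restrict_of_ae hUlb,
      ae_restrict_of_ae hUub, ae_restrict_mem hXi] with x h0 h1 h2 hxi
    have hxJ := hXisub hxi
    have hUx : (U x).toReal = u x := ENNReal.toReal_ofReal h0
    have hfin : U x * Iv ≠ ⊤ := ENNReal.mul_ne_top ENNReal.ofReal_ne_top hIvtop
    refine ⟨h0, ?_, ?_⟩
    · have := ENNReal.toReal_mono hfin (h1 hxJ)
      simpa [ENNReal.toReal_mul, hUx] using this
    · have := ENNReal.toReal_mono hEEtop (h2 hxJ)
      simpa [ENNReal.toReal_mul, hUx, hEEtoReal] using this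
  -- real a.e. facts in y
  have hyfacts : ∀ᵐ y ∂ν, 0 ≤ v y ∧ E⁻¹ * (a⁻¹ * v y) * mJ ≤ 1 ∧
      (νi.rnDeriv ν y).toReal ≤ E / a * v y * m := by
    filter_upwards [hv0, hVub, hHiub, hrn] with y h0 h1 h2 h3
    have hVy : (V y).toReal = v y := ENNReal.toReal_ofReal h0
    refine ⟨h0, ?_, ?_⟩
    · have := ENNReal.toReal_mono (by simp : (1 : ℝ≥0∞) ≠ ⊤) h1
      simpa [ENNReal.toReal_mul, ENNReal.toReal_inv, hVy, hEEtoReal] using this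
    · have hfin : EE / Iv * V y * μ Xi ≠ ⊤ :=
        ENNReal.mul_ne_top (ENNReal.mul_ne_top ((ENNReal.div_lt_top hEEtop hIv0).ne)
          ENNReal.ofReal_ne_top) (measure_ne_top μ Xi)
      have := ENNReal.toReal_mono hfin (h3 ▸ h2)
      simpa [ENNReal.toReal_mul, ENNReal.toReal_div, hVy, hEEtoReal] using this
  -- conclusion
  filter_upwards [hxfacts] with x hx
  filter_upwards [hyfacts] with y hy
  obtain ⟨hu0x, hxl, hxu⟩ := hx
  obtain ⟨hv0y, hyu, hyD⟩ := hy
  have hexp : Real.exp (-cmax / ε) = E⁻¹ := by rw [neg_div, Real.exp_neg]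
  have hexp2 : Real.exp (2 * cmax / ε) = E * E := by
    rw [hE, ← Real.exp_add]; ring_nf
  constructor
  · rw [hexp]
    have hD0 : 0 ≤ (νi.rnDeriv ν y).toReal := ENNReal.toReal_nonneg
    have key1 : (νi.rnDeriv ν y).toReal * E⁻¹ / m ≤ v y / a := by
      calc (νi.rnDeriv ν y).toReal * E⁻¹ / m ≤ (E / a * v y * m) * E⁻¹ / m := by
            gcongr
        _ = v y / a := by field_simp
    have key2 : v y / a ≤ u x * v y := by
      rw [div_le_iff₀ hapos]
      nlinarith
    exact key1.trans key2
  · rw [hexp2]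
    have hux : u x ≤ E / a := (le_div_iff₀ hapos).2 hxu
    have hvy : v y ≤ E * a / mJ := by
      rw [le_div_iff₀ hmJpos]
      have hEa : (0:ℝ) < E * a := mul_pos hEpos hapos
      have h' : (E⁻¹ * (a⁻¹ * v y) * mJ) * (E * a) ≤ 1 * (E * a) :=
        mul_le_mul_of_nonneg_right hyu hEa.le
      calc v y * mJ = (E⁻¹ * (a⁻¹ * v y) * mJ) * (E * a) := by field_simp
        _ ≤ 1 * (E * a) := h'
        _ = E * a := one_mul _
    have h1 : u x * v y ≤ (E / a) * (E * a / mJ) :=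
      mul_le_mul hux hvy hv0y (by positivity)
    have h2 : (E / a) * (E * a / mJ) = E * E / mJ := by field_simp
    have h3 : E * E / mJ ≤ E * E / m := by gcongr <;> positivity
    linarith
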